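/- Let g_1,...,g_m ∈ ℝ^d, w* ∈ ℝ^d, F = (1/m)∑_i g_i g_iᵀ assumed positive definite (or dampened to be so), and k ≤ d. For a set Q of k indices, define ρ_Q = (1/2)(w*_Q)ᵀ((F⁻¹)_{[Q,Q]})⁻¹ w*_Q. Then min over w' ∈ ℝ^d with w'_q = 0 for all q ∈ Q of (1/(2m)) ∑_i (g_iᵀw' − g_iᵀw*)² equals ρ_Q. Consequently, a vector w' with at least k zeros minimizing the squared error over all such vectors has support complement Q* minimizing ρ_Q over sets Q of size k. -/

import Mathlib

open Matrix

namespace OViTAux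

variable {k d : ℕ}

/-- The selection matrix of an embedding. -/
def emb (e : Fin k ↪ Fin d) : Matrix (Fin k) (Fin d) ℝ :=
  fun q j => if j = e q then 1 else 0

lemma emb_mulVec (e : Fin k ↪ Fin d) (v : Fin d → ℝ) :
    emb e *ᵥ v = fun q => v (e q) := by
  ext q
  simp [emb, mulVec, dotProduct]

lemma transpose_emb_mulVec_apply (e : Fin k ↪ Fin d) (x : Fin k → ℝ) (q : Fin k) :
    ((emb e)ᵀ *ᵥ x) (e q) = x q := by
  simp only [mulVec, dotProduct, transpose_apply, emb]
  rw [Finset.sum_eq_single q]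
  · simp
  · intro b _ hb
    simp only [ite_mul, one_mul, zero_mul, ite_eq_right_iff]
    intro h
    exact absurd ((e.injective h)).symm hb
  · simp

lemma emb_mul_mul_transpose (e : Fin k ↪ Fin d) (M : Matrix (Fin d) (Fin d) ℝ) :
    emb e * M * (emb e)ᵀ = M.submatrix e e := by
  ext q q'
  simp [emb, Matrix.mul_apply, Finset.sum_mul, mul_comm]

lemma dot_transpose_emb (e : Fin k ↪ Fin d) (v : Fin d → ℝ) (y : Fin k → ℝ) :
    v ⬝ᵥ ((emb e)ᵀ *ᵥ y) = (emb e *ᵥ v) ⬝ᵥ y := by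
  rw [Matrix.dotProduct_mulVec, Matrix.vecMul_transpose]

lemma dot_emb (e : Fin k ↪ Fin d) (x : Fin k → ℝ) (u : Fin d → ℝ) :
    x ⬝ᵥ (emb e *ᵥ u) = ((emb e)ᵀ *ᵥ x) ⬝ᵥ u := by
  rw [Matrix.dotProduct_mulVec, ← Matrix.mulVec_transpose]

lemma posDef_submatrix {B : Matrix (Fin d) (Fin d) ℝ} (hB : B.PosDef) (e : Fin k ↪ Fin d) :
    (B.submatrix e e).PosDef := by
  refine Matrix.PosDef.of_dotProduct_mulVec_pos (hB.posSemidef.submatrix e).1 fun x hx => ?_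
  set y : Fin d → ℝ := (emb e)ᵀ *ᵥ x with hy
  have hyx : ∀ q, y (e q) = x q := transpose_emb_mulVec_apply e x
  have hy0 : y ≠ 0 := by
    intro h
    apply hx
    ext q
    have := hyx q
    rw [h] at this
    simpa using this.symm
  have key : B.submatrix e e *ᵥ x = emb e *ᵥ (B *ᵥ y) := by
    rw [← emb_mul_mul_transpose e B, ← mulVec_mulVec, ← mulVec_mulVec]
  have : (star x) ⬝ᵥ (B.submatrix e e *ᵥ x) = (star y) ⬝ᵥ (B *ᵥ y) := by
    have hsx : star x = x := by simp
    have hsy : star y = y := by simp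
    rw [hsx, hsy, key]
    rw [dot_emb e x (B *ᵥ y)]
  rw [this]
  exact hB.dotProduct_mulVec_pos hy0

end OViTAux

/-- Theorem 1 (oViT): the constrained sparse regression problem
`min_{w' zero on Q} (1/(2m)) ∑ᵢ (gᵢᵀ w' - gᵢᵀ w*)²` has minimum value equal to the
Fisher-based group-OBS saliency `ρ_Q = (1/2) w*_Qᵀ ((F⁻¹)_{[Q,Q]})⁻¹ w*_Q`.
Consequently, a vector with at least `k` zeros minimizing the squared error has
support complement minimizing `ρ_Q` over index sets `Q` of size `k`. -/
theorem sparse_regression_eq_group_obs {d m k : ℕ}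
    (g : Fin m → (Fin d → ℝ)) (w : Fin d → ℝ)
    (F : Matrix (Fin d) (Fin d) ℝ)
    (hFdef : F = ((m : ℝ)⁻¹) • ∑ i : Fin m, vecMulVec (g i) (g i))
    (hF : F.PosDef) :
    let G : (Fin d → ℝ) → ℝ :=
      fun w' => (1 / (2 * (m : ℝ))) * ∑ i : Fin m, (g i ⬝ᵥ w' - g i ⬝ᵥ w) ^ 2
    let ρ : (Fin k ↪ Fin d) → ℝ :=
      fun e => (1 / 2 : ℝ) * ((fun q => w (e q)) ⬝ᵥ
        (((F⁻¹).submatrix e e)⁻¹).mulVec (fun q => w (e q)))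
    (∀ e : Fin k ↪ Fin d,
      IsLeast {v : ℝ | ∃ w' : Fin d → ℝ, (∀ q, w' (e q) = 0) ∧ v = G w'} (ρ e)) ∧
    (∀ (w'' : Fin d → ℝ) (e'' : Fin k ↪ Fin d), (∀ q, w'' (e'' q) = 0) →
      (∀ (w' : Fin d → ℝ) (e' : Fin k ↪ Fin d), (∀ q, w' (e' q) = 0) → G w'' ≤ G w') →
      ∀ e' : Fin k ↪ Fin d, ρ e'' ≤ ρ e') := by
  intro G ρ
  -- symmetry of F
  have hsymmF : Fᵀ = F := by
    ext i j
    have := congrFun (congrFun hF.1 i) j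
    simpa [Matrix.conjTranspose_apply] using this
  have hswap : ∀ a b : Fin d → ℝ, a ⬝ᵥ (F *ᵥ b) = b ⬝ᵥ (F *ᵥ a) := by
    intro a b
    have h1 : a ᵥ* F = F *ᵥ a := by
      conv_lhs => rw [← hsymmF]
      exact Matrix.vecMul_transpose F a
    rw [Matrix.dotProduct_mulVec, h1, dotProduct_comm]
  -- the quadratic form of F
  have hquad : ∀ v : Fin d → ℝ, v ⬝ᵥ (F *ᵥ v) = (m : ℝ)⁻¹ * ∑ i : Fin m, (g i ⬝ᵥ v) ^ 2 := by
    intro v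
    have hSv : (∑ i : Fin m, vecMulVec (g i) (g i)) *ᵥ v
        = ∑ i : Fin m, ((g i ⬝ᵥ v) • g i) := by
      ext j
      simp only [mulVec, dotProduct, Finset.sum_apply, Pi.smul_apply, smul_eq_mul,
        Matrix.sum_apply, vecMulVec_apply, Finset.sum_mul, Finset.mul_sum]
      rw [Finset.sum_comm]
      refine Finset.sum_congr rfl fun i _ => Finset.sum_congr rfl fun j' _ => by ring
    have hvs : v ⬝ᵥ (∑ i : Fin m, ((g i ⬝ᵥ v) • g i)) = ∑ i : Fin m, (g i ⬝ᵥ v) ^ 2 := by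
      simp only [dotProduct, Finset.sum_apply, Pi.smul_apply, smul_eq_mul, Finset.mul_sum]
      rw [Finset.sum_comm]
      refine Finset.sum_congr rfl fun i _ => ?_
      rw [pow_two]
      conv_rhs => rw [Finset.mul_sum]
      exact Finset.sum_congr rfl fun j _ => by ring
    rw [hFdef, smul_mulVec, dotProduct_smul, hSv, hvs, smul_eq_mul]
  -- G is the quadratic form at w' - w
  have hGq : ∀ w' : Fin d → ℝ, G w' = (1 / 2 : ℝ) * ((w' - w) ⬝ᵥ (F *ᵥ (w' - w))) := by
    intro w'
    show (1 / (2 * (m : ℝ))) * ∑ i : Fin m, (g i ⬝ᵥ w' - g i ⬝ᵥ w) ^ 2 = _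
    rw [hquad]
    have h1 : ∀ i : Fin m, g i ⬝ᵥ w' - g i ⬝ᵥ w = g i ⬝ᵥ (w' - w) := fun i =>
      (dotProduct_sub (g i) w' w).symm
    simp_rw [h1]
    ring
  have key : ∀ e : Fin k ↪ Fin d,
      IsLeast {v : ℝ | ∃ w' : Fin d → ℝ, (∀ q, w' (e q) = 0) ∧ v = G w'} (ρ e) := by
    intro e
    set B : Matrix (Fin d) (Fin d) ℝ := F⁻¹ with hBdef
    set P : Matrix (Fin k) (Fin k) ℝ := B.submatrix e e with hPdef
    have hBpd : B.PosDef := hF.inv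
    have hPpd : P.PosDef := OViTAux.posDef_submatrix hBpd e
    have hFB : F * B = 1 :=
      Matrix.mul_nonsing_inv F (isUnit_iff_ne_zero.mpr (ne_of_gt hF.det_pos))
    have hPP : P * P⁻¹ = 1 :=
      Matrix.mul_nonsing_inv P (isUnit_iff_ne_zero.mpr (ne_of_gt hPpd.det_pos))
    set xw : Fin k → ℝ := fun q => w (e q) with hxw
    set y : Fin k → ℝ := P⁻¹ *ᵥ xw with hydef
    set z : Fin d → ℝ := (OViTAux.emb e)ᵀ *ᵥ y with hzdef
    set s : ℝ := xw ⬝ᵥ y with hsdef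
    have hρ : ρ e = (1 / 2 : ℝ) * s := rfl
    have hEBz : OViTAux.emb e *ᵥ (B *ᵥ z) = xw := by
      rw [hzdef, mulVec_mulVec, mulVec_mulVec, OViTAux.emb_mul_mul_transpose, ← hPdef,
        hydef, mulVec_mulVec, hPP, one_mulVec]
    have hFBz : F *ᵥ (B *ᵥ z) = z := by rw [mulVec_mulVec, hFB, one_mulVec]
    set δs : Fin d → ℝ := -(B *ᵥ z) with hδs
    have hEδs : OViTAux.emb e *ᵥ δs = -xw := by rw [hδs, mulVec_neg, hEBz]
    have hFδs : F *ᵥ δs = -z := by rw [hδs, mulVec_neg, hFBz]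
    have hself : δs ⬝ᵥ (F *ᵥ δs) = s := by
      rw [hFδs, dotProduct_neg, hδs, neg_dotProduct, neg_neg, hzdef,
        OViTAux.dot_transpose_emb, hEBz]
    have hcross : ∀ δ : Fin d → ℝ, OViTAux.emb e *ᵥ δ = -xw → δ ⬝ᵥ (F *ᵥ δs) = s := by
      intro δ hδ
      rw [hFδs, dotProduct_neg, hzdef, OViTAux.dot_transpose_emb, hδ, neg_dotProduct, neg_neg]
    have hexp : ∀ δ : Fin d → ℝ, OViTAux.emb e *ᵥ δ = -xw →
        δ ⬝ᵥ (F *ᵥ δ) = (δ - δs) ⬝ᵥ (F *ᵥ (δ - δs)) + s := by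
      intro δ hδ
      have h1 := hcross δ hδ
      have h2 := hself
      have h3 : δs ⬝ᵥ (F *ᵥ δ) = δ ⬝ᵥ (F *ᵥ δs) := hswap δs δ
      simp only [mulVec_sub, dotProduct_sub, sub_dotProduct]
      linarith
    have hfeas : ∀ w' : Fin d → ℝ, (∀ q, w' (e q) = 0) →
        OViTAux.emb e *ᵥ (w' - w) = -xw := by
      intro w' hw'
      rw [OViTAux.emb_mulVec]
      funext q
      simp [hw' q, hxw]
    constructor
    · -- membership: w + δs attains ρ e
      refine ⟨w + δs, fun q => ?_, ?_⟩
      · have h0 : (fun q => δs (e q)) = -xw := by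
          rw [← OViTAux.emb_mulVec e δs, hEδs]
        have h1 : δs (e q) = -(w (e q)) := by
          simpa [hxw] using congrFun h0 q
        simp [h1]
      · have hd : w + δs - w = δs := by ring
        rw [hρ, hGq, hd, hself]
    · -- lower bound
      rintro v ⟨w', hw', rfl⟩
      have hδ := hfeas w' hw'
      have hnn : 0 ≤ (w' - w - δs) ⬝ᵥ (F *ᵥ (w' - w - δs)) := by
        have := hF.posSemidef.dotProduct_mulVec_nonneg (w' - w - δs)
        simpa using this
      rw [hρ, hGq, hexp _ hδ]
      linarith
  refine ⟨key, ?_⟩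
  intro w'' e'' hzero hmin e'
  obtain ⟨⟨w', hw', hval⟩, _⟩ := key e'
  have h1 : ρ e'' ≤ G w'' := (key e'').2 ⟨w'', hzero, rfl⟩
  calc ρ e'' ≤ G w'' := h1
    _ ≤ G w' := hmin w' e' hw'
    _ = ρ e' := hval.symm
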